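/- Let (Z_∞^{(*,j)})_{j≥1} be i.i.d. positive random variables with continuous distribution unbounded above, and let R be an independent increasing ℕ-valued random walk. If the distribution of Z_∞^* := Z_∞^{(*,1)} satisfies α (Z_∞^{(*,1)} ∨ ⋯ ∨ Z_∞^{(*,ξ)}) =_d Z_∞^* where ξ = R(1) is independent of the Z's and α ∈ (0,1), then the sequence (M_j)_{j≥1} with M_j := Z_∞^{(*,1)} ∨ ⋯ ∨ Z_∞^{(*,j)} satisfies (M_1, M_2, …) =_d (α M_{R(1)}, α M_{R(2)}, …), with R independent of (M_j). -/

import Mathlib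

open MeasureTheory ProbabilityTheory

section StmtNineHelpers

lemma stmt9_tsum_pi_prod : ∀ (m : ℕ) (g : Fin m → ℕ → ENNReal),
    ∑' v : Fin m → ℕ, ∏ i, g i (v i) = ∏ i, ∑' n, g i n := by
  intro m
  induction m with
  | zero =>
    intro g
    have h1 : ∀ v : Fin 0 → ℕ, (∏ i, g i (v i)) = 1 := fun v => by simp
    simp only [h1]
    rw [tsum_eq_single (fun _ => 0) (fun b hb => absurd (Subsingleton.elim b _) hb)]
    simp
  | succ m ih =>
    intro g
    rw [← Equiv.tsum_eq (Fin.consEquiv (fun _ : Fin (m + 1) => ℕ))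
      (fun v => ∏ i, g i (v i))]
    have h1 : ∀ p : ℕ × (Fin m → ℕ),
        (∏ i, g i ((Fin.consEquiv (fun _ : Fin (m + 1) => ℕ)) p i)) =
          g 0 p.1 * ∏ i : Fin m, g i.succ (p.2 i) := by
      rintro ⟨n, v⟩
      rw [Fin.prod_univ_succ]
      simp [Fin.consEquiv]
    simp only [h1]
    rw [ENNReal.tsum_prod']
    simp only [ENNReal.tsum_mul_left, ENNReal.tsum_mul_right]
    rw [ih (fun i => g i.succ), Fin.prod_univ_succ]

lemma stmt9_measurable_apply_nat {Ω : Type*} [MeasurableSpace Ω] {β : Type*}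
    [MeasurableSpace β] {N : Ω → ℕ} (hN : Measurable N) {H : ℕ → Ω → β}
    (hH : ∀ k, Measurable (H k)) : Measurable fun ω => H (N ω) ω := by
  have h : (fun ω => H (N ω) ω) = (fun p : Ω × ℕ => H p.2 p.1) ∘ fun ω => (ω, N ω) := rfl
  rw [h]
  exact (measurable_from_prod_countable_left fun k => hH k).comp (measurable_id.prodMk hN)

lemma stmt9_iSup_fin_le_iff {f : ℕ → ℝ} {n : ℕ} (hn : 0 < n) {c : ℝ} :
    (⨆ i : Fin n, f i) ≤ c ↔ ∀ i < n, f i ≤ c := by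
  have : Nonempty (Fin n) := Fin.pos_iff_nonempty.mp hn
  rw [ciSup_le_iff (Set.finite_range _).bddAbove]
  exact ⟨fun h i hi => h ⟨i, hi⟩, fun h i => h i i.2⟩

lemma stmt9_mul_iSup_fin_le_iff {α : ℝ} (hα : 0 < α) {f : ℕ → ℝ} {n : ℕ} (hn : 0 < n)
    {c : ℝ} : (α * ⨆ i : Fin n, f i) ≤ c ↔ ∀ i < n, f i ≤ c / α := by
  rw [mul_comm, ← le_div_iff₀ hα, stmt9_iSup_fin_le_iff hn]

lemma stmt9_measurable_iSup_fin {Ω : Type*} [MeasurableSpace Ω] {Z : ℕ → Ω → ℝ}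
    (hZ : ∀ j, Measurable (Z j)) (n : ℕ) :
    Measurable fun ω => ⨆ i : Fin n, Z i ω := by
  cases n with
  | zero =>
    have h : (fun ω => ⨆ i : Fin 0, Z i ω) = fun _ => (0 : ℝ) := by
      funext ω; exact Real.iSup_of_isEmpty fun i : Fin 0 => Z (i : ℕ) ω
    rw [h]; exact measurable_const
  | succ n =>
    have h : (fun ω => ⨆ i : Fin (n + 1), Z i ω) =
        fun ω => (Finset.univ : Finset (Fin (n + 1))).sup' Finset.univ_nonempty
          fun i => Z i ω := by
      funext ω; rw [Finset.sup'_univ_eq_ciSup]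
    rw [h]
    have h2 : (fun ω => (Finset.univ : Finset (Fin (n + 1))).sup' Finset.univ_nonempty
        fun i => Z i ω) = (Finset.univ : Finset (Fin (n + 1))).sup' Finset.univ_nonempty
          fun i => Z (i : ℕ) := by
      funext ω; exact (Finset.sup'_apply _ _ _).symm
    rw [h2]
    exact Finset.measurable_sup' _ fun i _ => hZ i

/-- The collection of "box" sets in `ℕ → ℝ` determined by finitely many `Iic` constraints. -/
def stmt9_boxes : Set (Set (ℕ → ℝ)) :=
  {S | ∃ (s : Finset ℕ) (x : ℕ → ℝ), S = {f | ∀ j ∈ s, f j ≤ x j}}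

lemma stmt9_isPiSystem_boxes : IsPiSystem stmt9_boxes := by
  classical
  rintro _ ⟨s, x, rfl⟩ _ ⟨t, y, rfl⟩ -
  refine ⟨s ∪ t, fun j => if j ∈ s then (if j ∈ t then min (x j) (y j) else x j) else y j, ?_⟩
  ext f
  simp only [Set.mem_inter_iff, Set.mem_setOf_eq, Finset.mem_union]
  constructor
  · rintro ⟨h1, h2⟩ j hj
    by_cases hjs : j ∈ s <;> by_cases hjt : j ∈ t <;>
      simp only [hjs, hjt, if_true, if_false, le_min_iff]
    · exact ⟨h1 j hjs, h2 j hjt⟩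
    · exact h1 j hjs
    · exact h2 j hjt
    · tauto
  · intro h
    constructor <;> intro j hj
    · have := h j (Or.inl hj)
      simp only [hj, if_true] at this
      by_cases hjt : j ∈ t <;> simp only [hjt, if_true, if_false, le_min_iff] at this
      · exact this.1
      · exact this
    · have := h j (Or.inr hj)
      by_cases hjs : j ∈ s <;> simp only [hjs, hj, if_true, if_false, le_min_iff] at this
      · exact this.2
      · exact this

lemma stmt9_measurableSet_boxes {S : Set (ℕ → ℝ)} (hS : S ∈ stmt9_boxes) :
    MeasurableSet S := by
  obtain ⟨s, x, rfl⟩ := hS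
  have h : {f : ℕ → ℝ | ∀ j ∈ s, f j ≤ x j} =
      ⋂ j ∈ s, (fun f : ℕ → ℝ => f j) ⁻¹' Set.Iic (x j) := by
    ext f; simp [Set.mem_iInter]
  rw [h]
  exact MeasurableSet.biInter s.countable_toSet
    fun j _ => (measurable_pi_apply j) measurableSet_Iic

lemma stmt9_generateFrom_boxes :
    MeasurableSpace.generateFrom stmt9_boxes = (inferInstance : MeasurableSpace (ℕ → ℝ)) := by
  apply le_antisymm
  · exact MeasurableSpace.generateFrom_le fun S hS => stmt9_measurableSet_boxes hS
  · rw [show (inferInstance : MeasurableSpace (ℕ → ℝ)) = MeasurableSpace.pi from rfl,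
      MeasurableSpace.pi_eq_generateFrom_projections]
    apply MeasurableSpace.generateFrom_le
    rintro _ ⟨i, A, hA, rfl⟩
    have hmeas : @Measurable (ℕ → ℝ) ℝ (MeasurableSpace.generateFrom stmt9_boxes)
        (MeasurableSpace.generateFrom (Set.range Set.Iic)) (Function.eval i) := by
      refine @measurable_generateFrom _ _ (MeasurableSpace.generateFrom stmt9_boxes) _ _ ?_
      rintro _ ⟨c, rfl⟩
      apply MeasurableSpace.measurableSet_generateFrom
      exact ⟨{i}, fun _ => c, by ext f; simp [Function.eval]⟩
    have hA' : MeasurableSet[MeasurableSpace.generateFrom (Set.range Set.Iic)] A := by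
      rw [← borel_eq_generateFrom_Iic ℝ]
      exact (inferInstance : BorelSpace ℝ).measurable_eq ▸ hA
    exact hmeas hA'

lemma stmt9_biInter_meas {δ : Type*} [MeasurableSpace δ] {s : Finset ℕ} {f : ℕ → Set δ}
    (h : ∀ i, MeasurableSet (f i)) : MeasurableSet (⋂ i ∈ s, f i) :=
  MeasurableSet.iInter fun i => MeasurableSet.iInter fun _ => h i

end StmtNineHelpers
/-- Let `(Z j)` be i.i.d. positive random variables with continuous, unbounded-above
distribution, let `R` be an independent increasing `ℕ`-valued random walk with steps `ξ`,
and `α ∈ (0,1)`.  If `α (Z_1 ∨ ⋯ ∨ Z_ξ) =_d Z_1`, then the running maximum sequence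
`M j = Z_1 ∨ ⋯ ∨ Z_j` satisfies `(M_1, M_2, …) =_d (α M_{R(1)}, α M_{R(2)}, …)`.
(Here the max over `1,…,k` is written as `⨆ i : Fin k, Z i`.) -/
theorem stmt9 {Ω : Type*} [MeasureSpace Ω] [IsProbabilityMeasure (ℙ : Measure Ω)]
    (α : ℝ) (hα : α ∈ Set.Ioo (0 : ℝ) 1)
    (Z : ℕ → Ω → ℝ) (hZmeas : ∀ j, Measurable (Z j))
    (hZpos : ∀ j ω, 0 < Z j ω)
    (hZiid : iIndepFun Z ℙ)
    (hZid : ∀ j, IdentDistrib (Z j) (Z 0) ℙ ℙ)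
    (hZcont : ∀ x : ℝ, ℙ {ω | Z 0 ω = x} = 0)
    (hZunbdd : ∀ x : ℝ, 0 < ℙ {ω | x < Z 0 ω})
    (ξ : ℕ → Ω → ℕ) (hξmeas : ∀ i, Measurable (ξ i)) (hξpos : ∀ i ω, 1 ≤ ξ i ω)
    (hξiid : iIndepFun ξ ℙ)
    (hξid : ∀ i, IdentDistrib (ξ i) (ξ 0) ℙ ℙ)
    (R : ℕ → Ω → ℕ) (hR : ∀ k ω, R k ω = ∑ i ∈ Finset.range k, ξ i ω)
    (hindep : IndepFun (fun ω => fun j : ℕ => Z j ω) (fun ω => fun i : ℕ => ξ i ω) ℙ)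
    (hSFPE : Measure.map (fun ω => α * ⨆ i : Fin (R 1 ω), Z i ω) ℙ =
      Measure.map (Z 0) ℙ) :
    Measure.map (fun ω => fun j : ℕ => ⨆ i : Fin (j + 1), Z i ω) ℙ =
      Measure.map (fun ω => fun j : ℕ => α * ⨆ i : Fin (R (j + 1) ω), Z i ω) ℙ := by
  classical
  obtain ⟨hα0, hα1⟩ := hα
  set F : ℝ → ENNReal := fun x => ℙ (Z 0 ⁻¹' Set.Iic x) with hFdef
  set p : ℕ → ENNReal := fun n => ℙ (ξ 0 ⁻¹' {n}) with hpdef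
  have hRmeas : ∀ k, Measurable (R k) := by
    intro k
    have h : R k = fun ω => ∑ i ∈ Finset.range k, ξ i ω := funext fun ω => hR k ω
    rw [h]
    exact Finset.measurable_sum _ fun i _ => hξmeas i
  have hMn : ∀ n : ℕ, Measurable fun ω => α * ⨆ i : Fin n, Z i ω :=
    fun n => (stmt9_measurable_iSup_fin hZmeas n).const_mul α
  have hRHSj : ∀ j : ℕ, Measurable fun ω => α * ⨆ i : Fin (R (j + 1) ω), Z i ω :=
    fun j => stmt9_measurable_apply_nat (hRmeas (j + 1)) hMn
  have hLHSj : ∀ j : ℕ, Measurable fun ω => ⨆ i : Fin (j + 1), Z i ω :=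
    fun j => stmt9_measurable_iSup_fin hZmeas (j + 1)
  have hLHS : Measurable fun ω => fun j : ℕ => ⨆ i : Fin (j + 1), Z i ω :=
    measurable_pi_lambda _ hLHSj
  have hRHS : Measurable fun ω => fun j : ℕ => α * ⨆ i : Fin (R (j + 1) ω), Z i ω :=
    measurable_pi_lambda _ hRHSj
  have hFz : ∀ (i : ℕ) (c : ℝ), ℙ (Z i ⁻¹' Set.Iic c) = F c :=
    fun i c => (hZid i).measure_mem_eq measurableSet_Iic
  have hpn : ∀ (i n : ℕ), ℙ (ξ i ⁻¹' {n}) = p n :=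
    fun i n => (hξid i).measure_mem_eq (measurableSet_singleton n)
  have hp0 : p 0 = 0 := by
    have h : ξ 0 ⁻¹' {0} = ∅ := by
      ext ω
      simp only [Set.mem_preimage, Set.mem_singleton_iff, Set.mem_empty_iff_false, iff_false]
      intro h0
      have := hξpos 0 ω
      omega
    simp [hpdef, h]
  have hZbox : ∀ (T : Finset ℕ) (c : ℕ → ℝ),
      ℙ (⋂ i ∈ T, Z i ⁻¹' Set.Iic (c i)) = ∏ i ∈ T, F (c i) := by
    intro T c
    rw [hZiid.measure_inter_preimage_eq_mul T (sets := fun i => Set.Iic (c i))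
      (fun i _ => measurableSet_Iic)]
    exact Finset.prod_congr rfl fun i _ => hFz i (c i)
  have hξbox : ∀ (T : Finset ℕ) (w : ℕ → ℕ),
      ℙ (⋂ i ∈ T, ξ i ⁻¹' {w i}) = ∏ i ∈ T, p (w i) := by
    intro T w
    rw [hξiid.measure_inter_preimage_eq_mul T (sets := fun i => {w i})
      (fun i _ => measurableSet_singleton _)]
    exact Finset.prod_congr rfl fun i _ => hpn i (w i)
  have hsplit : ∀ (SZ : Set (ℕ → ℝ)) (Sξ : Set (ℕ → ℕ)), MeasurableSet SZ → MeasurableSet Sξ →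
      ℙ ((fun ω => fun j : ℕ => Z j ω) ⁻¹' SZ ∩ (fun ω => fun i : ℕ => ξ i ω) ⁻¹' Sξ) =
        ℙ ((fun ω => fun j : ℕ => Z j ω) ⁻¹' SZ) * ℙ ((fun ω => fun i : ℕ => ξ i ω) ⁻¹' Sξ) :=
    fun SZ Sξ h1 h2 => hindep.measure_inter_preimage_eq_mul SZ Sξ h1 h2
  -- the key consequence of the SFPE for CDFs
  have hkey : ∀ x : ℝ, F x = ∑' n : ℕ, p n * F (x / α) ^ n := by
    intro x
    have hL : Measure.map (fun ω => α * ⨆ i : Fin (R 1 ω), Z i ω) ℙ (Set.Iic x) =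
        Measure.map (Z 0) ℙ (Set.Iic x) := by rw [hSFPE]
    rw [Measure.map_apply (stmt9_measurable_apply_nat (hRmeas 1) hMn) measurableSet_Iic,
      Measure.map_apply (hZmeas 0) measurableSet_Iic] at hL
    have hR1 : ∀ ω, R 1 ω = ξ 0 ω := fun ω => by rw [hR]; simp
    have hA : ∀ n : ℕ, ℙ ((⋂ i ∈ Finset.range n, Z i ⁻¹' Set.Iic (x / α)) ∩ ξ 0 ⁻¹' {n}) =
        p n * F (x / α) ^ n := by
      intro n
      have e1 : (⋂ i ∈ Finset.range n, Z i ⁻¹' Set.Iic (x / α)) =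
          (fun ω => fun j : ℕ => Z j ω) ⁻¹'
            (⋂ i ∈ Finset.range n, (fun f : ℕ → ℝ => f i) ⁻¹' Set.Iic (x / α)) := by
        ext ω; simp
      have e2 : ξ 0 ⁻¹' {n} = (fun ω => fun i : ℕ => ξ i ω) ⁻¹'
          ((fun u : ℕ → ℕ => u 0) ⁻¹' {n}) := rfl
      rw [e1, e2, hsplit (⋂ i ∈ Finset.range n, (fun f : ℕ → ℝ => f i) ⁻¹' Set.Iic (x / α))
        ((fun u : ℕ → ℕ => u 0) ⁻¹' {n})
        (stmt9_biInter_meas fun i => (measurable_pi_apply i) (measurableSet_Iic (a := x / α)))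
        ((measurable_pi_apply 0) (measurableSet_singleton n)), ← e1, ← e2,
        hZbox (Finset.range n) (fun _ => x / α), hpn 0 n, Finset.prod_const,
        Finset.card_range, mul_comm]
    have hdecomp : (fun ω => α * ⨆ i : Fin (R 1 ω), Z i ω) ⁻¹' Set.Iic x =
        ⋃ n : ℕ, ((⋂ i ∈ Finset.range n, Z i ⁻¹' Set.Iic (x / α)) ∩ ξ 0 ⁻¹' {n}) := by
      ext ω
      simp only [Set.mem_preimage, Set.mem_Iic, Set.mem_iUnion, Set.mem_inter_iff,
        Set.mem_iInter, Finset.mem_range, Set.mem_singleton_iff]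
      have hpos : 0 < R 1 ω := by rw [hR1]; exact hξpos 0 ω
      constructor
      · intro h
        refine ⟨ξ 0 ω, fun i hi => ?_, rfl⟩
        exact (stmt9_mul_iSup_fin_le_iff (f := fun k => Z k ω) hα0 hpos).mp h i (by rw [hR1 ω]; exact hi)
      · rintro ⟨n, hn, hξn⟩
        rw [stmt9_mul_iSup_fin_le_iff (f := fun k => Z k ω) hα0 hpos]
        intro i hi
        exact hn i (by rw [hR1 ω, hξn] at hi; exact hi)
    have hdisj : Pairwise (Function.onFun Disjoint
        fun n => (⋂ i ∈ Finset.range n, Z i ⁻¹' Set.Iic (x / α)) ∩ ξ 0 ⁻¹' {n}) := by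
      intro a b hab
      apply Set.disjoint_left.mpr
      rintro ω ⟨-, ha⟩ ⟨-, hb⟩
      exact hab ((Set.mem_singleton_iff.mp ha).symm.trans (Set.mem_singleton_iff.mp hb))
    rw [hdecomp, measure_iUnion hdisj (fun n =>
      (stmt9_biInter_meas fun i => (hZmeas i) (measurableSet_Iic (a := x / α))).inter
        ((hξmeas 0) (measurableSet_singleton n)))] at hL
    rw [show F x = ℙ (Z 0 ⁻¹' Set.Iic x) from rfl, ← hL]
    exact tsum_congr hA
  -- the main finite-dimensional box identity
  have hbox : ∀ (s : Finset ℕ) (x : ℕ → ℝ),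
      ℙ {ω | ∀ j ∈ s, (⨆ i : Fin (j + 1), Z i ω) ≤ x j} =
      ℙ {ω | ∀ j ∈ s, (α * ⨆ i : Fin (R (j + 1) ω), Z i ω) ≤ x j} := by
    intro s x
    rcases s.eq_empty_or_nonempty with rfl | hne
    · simp
    obtain ⟨m, hjm, hmem⟩ : ∃ m : ℕ, (∀ j ∈ s, j < m) ∧ (∀ i < m, ∃ j ∈ s, i ≤ j) :=
      ⟨s.max' hne + 1, fun j hj => Nat.lt_succ_of_le (s.le_max' j hj),
        fun i hi => ⟨s.max' hne, s.max'_mem hne, Nat.lt_succ_iff.mp hi⟩⟩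
    obtain ⟨B, hB1⟩ : ∃ B : ℕ → ℝ, ∀ i < m, ∀ c : ℝ,
        (c ≤ B i ↔ ∀ j ∈ s, i ≤ j → c ≤ x j) := by
      refine ⟨fun i => if h : (s.filter (fun j => i ≤ j)).Nonempty
        then (s.filter (fun j => i ≤ j)).inf' h x else 0, fun i hi c => ?_⟩
      obtain ⟨j0, hj0s, hj0⟩ := hmem i hi
      have hne' : (s.filter (fun j => i ≤ j)).Nonempty :=
        ⟨j0, Finset.mem_filter.mpr ⟨hj0s, hj0⟩⟩
      simp only [dif_pos hne', Finset.le_inf'_iff]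
      constructor
      · intro h j hj hij
        exact h j (Finset.mem_filter.mpr ⟨hj, hij⟩)
      · intro h j hj
        obtain ⟨hj1, hj2⟩ := Finset.mem_filter.mp hj
        exact h j hj1 hj2
    have hLHSev : {ω | ∀ j ∈ s, (⨆ i : Fin (j + 1), Z i ω) ≤ x j} =
        ⋂ i ∈ Finset.range m, Z i ⁻¹' Set.Iic (B i) := by
      ext ω
      simp only [Set.mem_setOf_eq, Set.mem_iInter, Finset.mem_range, Set.mem_preimage,
        Set.mem_Iic]
      constructor
      · intro h i him
        rw [hB1 i him _]
        intro j hj hij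
        exact (stmt9_iSup_fin_le_iff (f := fun k => Z k ω) (Nat.succ_pos j)).mp (h j hj) i
          (Nat.lt_succ_of_le hij)
      · intro h j hj
        rw [stmt9_iSup_fin_le_iff (f := fun k => Z k ω) (Nat.succ_pos j)]
        intro i hij
        have hij' : i ≤ j := Nat.lt_succ_iff.mp hij
        exact (hB1 i (lt_of_le_of_lt hij' (hjm j hj)) (Z i ω)).mp
          (h i (lt_of_le_of_lt hij' (hjm j hj))) j hj hij'
    rw [hLHSev, hZbox]
    set E := {ω | ∀ j ∈ s, (α * ⨆ i : Fin (R (j + 1) ω), Z i ω) ≤ x j} with hEdef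
    have hEmeas : MeasurableSet E := by
      have h : E = ⋂ j ∈ s, (fun ω => α * ⨆ i : Fin (R (j + 1) ω), Z i ω) ⁻¹' Set.Iic (x j) := by
        ext ω; simp [hEdef]
      rw [h]
      exact stmt9_biInter_meas fun j => (hRHSj j) measurableSet_Iic
    obtain ⟨w, hwv, hwo⟩ : ∃ w : (Fin m → ℕ) → ℕ → ℕ,
        (∀ v (i : Fin m), w v (i : ℕ) = v i) ∧ (∀ v i, m ≤ i → w v i = 1) := by
      refine ⟨fun v i => if h : i < m then v ⟨i, h⟩ else 1, fun v i => ?_, fun v i hi => ?_⟩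
      · simp only [dif_pos i.2, Fin.eta]
      · simp only [dif_neg (Nat.not_lt.mpr hi)]
    obtain ⟨Ev, hEvmeas, hEvmem, hEvpre, hEvP⟩ : ∃ Ev : (Fin m → ℕ) → Set Ω,
        (∀ v, MeasurableSet (Ev v)) ∧
        (∀ v ω, ω ∈ Ev v ↔ ∀ i < m, ξ i ω = w v i) ∧
        (∀ v, Ev v = (fun ω => fun i : ℕ => ξ i ω) ⁻¹'
          (⋂ i ∈ Finset.range m, (fun u : ℕ → ℕ => u i) ⁻¹' {w v i})) ∧
        (∀ v, ℙ (Ev v) = ∏ i ∈ Finset.range m, p (w v i)) := by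
      refine ⟨fun v => ⋂ i ∈ Finset.range m, ξ i ⁻¹' {w v i},
        fun v => stmt9_biInter_meas fun i => (hξmeas i) (measurableSet_singleton _),
        fun v ω => ?_, fun v => ?_, fun v => hξbox (Finset.range m) (w v)⟩
      · simp
      · ext ω; simp
    have hEvuniv : (⋃ v, Ev v) = Set.univ := by
      ext ω
      simp only [Set.mem_iUnion, Set.mem_univ, iff_true]
      refine ⟨fun i => ξ (i : ℕ) ω, (hEvmem _ ω).mpr fun i hi => ?_⟩
      exact (hwv (fun i : Fin m => ξ (i : ℕ) ω) ⟨i, hi⟩).symm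
    have hEvdisj : Pairwise (Function.onFun Disjoint fun v => E ∩ Ev v) := by
      intro a b hab
      have hex : ∃ i : Fin m, a i ≠ b i := by
        by_contra hc
        push_neg at hc
        exact hab (funext hc)
      obtain ⟨i, hi⟩ := hex
      apply Set.disjoint_left.mpr
      rintro ω ⟨-, ha⟩ ⟨-, hb⟩
      have h1 := (hEvmem a ω).mp ha (i : ℕ) i.2
      have h2 := (hEvmem b ω).mp hb (i : ℕ) i.2
      rw [hwv] at h1 h2
      exact hi (by rw [← h1, ← h2])
    have hEdecomp : ℙ E = ∑' v : Fin m → ℕ, ℙ (E ∩ Ev v) := by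
      conv_lhs => rw [show E = ⋃ v, (E ∩ Ev v) by
        rw [← Set.inter_iUnion, hEvuniv, Set.inter_univ]]
      exact measure_iUnion hEvdisj fun v => hEmeas.inter (hEvmeas v)
    rw [hEdecomp]
    symm
    obtain ⟨g, hg⟩ : ∃ g : Fin m → ℕ → ENNReal,
        ∀ i n, g i n = p n * F (B (i : ℕ) / α) ^ n :=
      ⟨fun i n => p n * F (B (i : ℕ) / α) ^ n, fun i n => rfl⟩
    have hterm : ∀ v : Fin m → ℕ, ℙ (E ∩ Ev v) = ∏ i : Fin m, g i (v i) := by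
      intro v
      by_cases hv : ∀ i : Fin m, 1 ≤ v i
      · -- main case
        have hw1 : ∀ i, 1 ≤ w v i := by
          intro i
          by_cases h : i < m
          · have := hwv v ⟨i, h⟩
            simp only at this
            rw [this]
            exact hv ⟨i, h⟩
          · rw [hwo v i (by omega)]
        obtain ⟨S, hS0, hSsucc, hSsum⟩ : ∃ S : ℕ → ℕ, S 0 = 0 ∧
            (∀ k, S (k + 1) = S k + w v k) ∧
            (∀ k, S k = ∑ i ∈ Finset.range k, w v i) :=
          ⟨fun k => ∑ i ∈ Finset.range k, w v i, by simp,
            fun k => Finset.sum_range_succ _ k, fun k => rfl⟩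
        have hSmono : ∀ a b, a ≤ b → S a ≤ S b := by
          intro a b hab
          rw [hSsum a, hSsum b]
          exact Finset.sum_le_sum_of_subset (Finset.range_subset_range.mpr hab)
        have hSlt : ∀ k l, k < l → S k < S l := by
          intro k l hkl
          calc S k < S k + w v k := Nat.lt_add_of_pos_right (hw1 k)
            _ = S (k + 1) := (hSsucc k).symm
            _ ≤ S l := hSmono _ _ hkl
        have hSpos : ∀ k, 0 < k → 0 < S k := by
          intro k hk
          have := hSlt 0 k hk
          omega
        obtain ⟨D, hD1⟩ : ∃ D : ℕ → ℝ, ∀ i < S m, ∀ c : ℝ,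
            (c ≤ D i ↔ ∀ j ∈ s, i < S (j + 1) → c ≤ x j / α) := by
          refine ⟨fun i => if h : (s.filter (fun j => i < S (j + 1))).Nonempty
            then (s.filter (fun j => i < S (j + 1))).inf' h (fun j => x j / α) else 0,
            fun i hi c => ?_⟩
          have hm1 : 1 ≤ m := by
            obtain ⟨j1, hj1⟩ := hne
            have := hjm j1 hj1
            omega
          obtain ⟨j0, hj0s, hj0⟩ := hmem (m - 1) (by omega)
          have hne' : (s.filter (fun j => i < S (j + 1))).Nonempty :=
            ⟨j0, Finset.mem_filter.mpr ⟨hj0s, lt_of_lt_of_le hi (hSmono _ _ (by omega))⟩⟩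
          simp only [dif_pos hne', Finset.le_inf'_iff]
          constructor
          · intro h j hj hij
            exact h j (Finset.mem_filter.mpr ⟨hj, hij⟩)
          · intro h j hj
            obtain ⟨hj1, hj2⟩ := Finset.mem_filter.mp hj
            exact h j hj1 hj2
        have hB1' : ∀ k < m, ∀ c : ℝ,
            (c ≤ B k / α ↔ ∀ j ∈ s, k ≤ j → c ≤ x j / α) := by
          intro k hk c
          rw [le_div_iff₀ hα0, hB1 k hk (c * α)]
          exact forall₂_congr fun j hj =>
            imp_congr_right fun _ => (le_div_iff₀ hα0).symm
        have hRS : ∀ ω, ω ∈ Ev v → ∀ k, k ≤ m → R k ω = S k := by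
          intro ω hω k hk
          rw [hR, hSsum]
          exact Finset.sum_congr rfl fun i hi =>
            (hEvmem v ω).mp hω i (lt_of_lt_of_le (Finset.mem_range.mp hi) hk)
        have hEcap : E ∩ Ev v = (⋂ i ∈ Finset.range (S m), Z i ⁻¹' Set.Iic (D i)) ∩ Ev v := by
          ext ω
          simp only [Set.mem_inter_iff]
          refine and_congr_left fun hω => ?_
          simp only [hEdef, Set.mem_setOf_eq, Set.mem_iInter, Finset.mem_range,
            Set.mem_preimage, Set.mem_Iic]
          constructor
          · intro h i hi
            rw [hD1 i hi _]
            intro j hjs hij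
            have hj1 : j + 1 ≤ m := hjm j hjs
            have hpos : 0 < R (j + 1) ω := by
              rw [hRS ω hω (j + 1) hj1]; exact hSpos _ (Nat.succ_pos j)
            exact (stmt9_mul_iSup_fin_le_iff (f := fun k => Z k ω) hα0 hpos).mp (h j hjs) i
              (by rw [hRS ω hω (j + 1) hj1]; exact hij)
          · intro h j hjs
            have hj1 : j + 1 ≤ m := hjm j hjs
            have hpos : 0 < R (j + 1) ω := by
              rw [hRS ω hω (j + 1) hj1]; exact hSpos _ (Nat.succ_pos j)
            rw [stmt9_mul_iSup_fin_le_iff (f := fun k => Z k ω) hα0 hpos]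
            intro i hi
            rw [hRS ω hω (j + 1) hj1] at hi
            have him : i < S m := lt_of_lt_of_le hi (hSmono _ _ hj1)
            exact (hD1 i him (Z i ω)).mp (h i him) j hjs hi
        rw [hEcap]
        have hZev : (⋂ i ∈ Finset.range (S m), Z i ⁻¹' Set.Iic (D i)) =
            (fun ω => fun j : ℕ => Z j ω) ⁻¹'
              (⋂ i ∈ Finset.range (S m), (fun f : ℕ → ℝ => f i) ⁻¹' Set.Iic (D i)) := by
          ext ω; simp
        rw [hZev, hEvpre v, hsplit
          (⋂ i ∈ Finset.range (S m), (fun f : ℕ → ℝ => f i) ⁻¹' Set.Iic (D i))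
          (⋂ i ∈ Finset.range m, (fun u : ℕ → ℕ => u i) ⁻¹' {w v i})
          (stmt9_biInter_meas fun i => (measurable_pi_apply i) (measurableSet_Iic (a := D i)))
          (stmt9_biInter_meas fun i => (measurable_pi_apply i) (measurableSet_singleton (w v i))),
          ← hZev, ← hEvpre v, hZbox, hEvP v]
        have hDblock : ∀ k, k < m → ∀ i, i < w v k → D (S k + i) = B k / α := by
          intro k hk i hi
          have him : S k + i < S m := by
            have h2 : S k + i < S (k + 1) := by rw [hSsucc]; omega
            exact lt_of_lt_of_le h2 (hSmono _ _ hk)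
          have hiff : ∀ j ∈ s, (S k + i < S (j + 1) ↔ k ≤ j) := by
            intro j hjs
            constructor
            · intro hlt
              by_contra hkj
              push_neg at hkj
              have h1 : S (j + 1) ≤ S k := hSmono _ _ hkj
              omega
            · intro hkj
              have h1 : S (k + 1) ≤ S (j + 1) := hSmono _ _ (Nat.succ_le_succ hkj)
              have h2 : S k + i < S (k + 1) := by rw [hSsucc]; omega
              omega
          apply le_antisymm
          · refine (hB1' k hk _).mpr fun j hjs hkj => ?_
            exact (hD1 _ him _).mp le_rfl j hjs ((hiff j hjs).mpr hkj)
          · refine (hD1 _ him _).mpr fun j hjs hlt => ?_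
            exact (hB1' k hk _).mp le_rfl j hjs ((hiff j hjs).mp hlt)
        have hprod : ∀ k, k ≤ m → ∏ i ∈ Finset.range (S k), F (D i) =
            ∏ k' ∈ Finset.range k, F (B k' / α) ^ w v k' := by
          intro k
          induction k with
          | zero => intro _; simp [hS0]
          | succ k ihk =>
            intro hk
            have hk' : k ≤ m := Nat.le_of_succ_le hk
            rw [hSsucc, Finset.prod_range_add, ihk hk', Finset.prod_range_succ]
            congr 1
            calc ∏ i ∈ Finset.range (w v k), F (D (S k + i))
                = ∏ i ∈ Finset.range (w v k), F (B k / α) :=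
                  Finset.prod_congr rfl fun i hi => by
                    rw [hDblock k (Nat.lt_of_succ_le hk) i (Finset.mem_range.mp hi)]
              _ = F (B k / α) ^ w v k := by rw [Finset.prod_const, Finset.card_range]
        rw [hprod m le_rfl, ← Finset.prod_mul_distrib,
          Finset.prod_range fun i => F (B i / α) ^ w v i * p (w v i)]
        refine Finset.prod_congr rfl fun i _ => ?_
        rw [hg, hwv v i, mul_comm]
      · -- degenerate case: some v i = 0
        push_neg at hv
        obtain ⟨i0, hi0⟩ := hv
        have hvi0 : v i0 = 0 := by omega
        have hEv0 : Ev v = ∅ := by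
          ext ω
          simp only [Set.mem_empty_iff_false, iff_false]
          intro hωv
          have h1 := (hEvmem v ω).mp hωv (i0 : ℕ) i0.2
          rw [hwv, hvi0] at h1
          have := hξpos i0 ω
          omega
        rw [hEv0, Set.inter_empty, measure_empty]
        symm
        apply Finset.prod_eq_zero (Finset.mem_univ i0)
        rw [hg, hvi0, hp0, pow_zero, zero_mul]
    calc ∑' v : Fin m → ℕ, ℙ (E ∩ Ev v)
        = ∑' v : Fin m → ℕ, ∏ i : Fin m, g i (v i) := tsum_congr hterm
      _ = ∏ i : Fin m, ∑' n : ℕ, g i n := stmt9_tsum_pi_prod m g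
      _ = ∏ i : Fin m, F (B (i : ℕ)) := by
          refine Finset.prod_congr rfl fun i _ => ?_
          rw [show (∑' n : ℕ, g i n) = ∑' n : ℕ, p n * F (B (i : ℕ) / α) ^ n from
            tsum_congr fun n => hg i n]
          exact (hkey (B (i : ℕ))).symm
      _ = ∏ i ∈ Finset.range m, F (B i) := (Finset.prod_range fun i => F (B i)).symm
  -- assemble via the π-system of boxes
  haveI h1 : IsProbabilityMeasure (Measure.map
      (fun ω => fun j : ℕ => ⨆ i : Fin (j + 1), Z i ω) ℙ) :=
    Measure.isProbabilityMeasure_map hLHS.aemeasurable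
  haveI h2 : IsProbabilityMeasure (Measure.map
      (fun ω => fun j : ℕ => α * ⨆ i : Fin (R (j + 1) ω), Z i ω) ℙ) :=
    Measure.isProbabilityMeasure_map hRHS.aemeasurable
  refine MeasureTheory.ext_of_generate_finite stmt9_boxes stmt9_generateFrom_boxes.symm
    stmt9_isPiSystem_boxes ?_ ?_
  · rintro S ⟨s, x, rfl⟩
    rw [Measure.map_apply hLHS (stmt9_measurableSet_boxes ⟨s, x, rfl⟩),
      Measure.map_apply hRHS (stmt9_measurableSet_boxes ⟨s, x, rfl⟩)]
    exact hbox s x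
  · simp
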